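/- With θ = dz - 2∑_{i=1}^{2m}(y_i dx_i - x_i dy_i) on R^{4m+4} and f_1 = e_1 + 2∑_{a=1}^m (y_{2a-1} x_{2a} - x_{2a-1} y_{2a}), the 1-form I_1(dz) equals the exact form df_1, where I_1 acts on 1-forms dually to the hypercomplex structure (so that I_1 dx_{2a-1} = dx_{2a}, I_1 dy_{2a-1} = dy_{2a}, I_1 θ = de_1, I_1 de_2 = de_3). -/

import Mathlib

/-- Points of `ℝ^{4m+4}` with coordinates `(x, y, z, e)`, where
`x (a, 0) = x_{2a-1}`, `x (a, 1) = x_{2a}` and similarly for `y`. -/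
abbrev Pt (m : ℕ) := (Fin m × Fin 2 → ℝ) × (Fin m × Fin 2 → ℝ) × ℝ × (Fin 3 → ℝ)

/-- The coordinate 1-form `dx_i`. -/
def dxL (m : ℕ) (i : Fin m × Fin 2) : Pt m →ₗ[ℝ] ℝ where
  toFun p := p.1 i
  map_add' _ _ := rfl
  map_smul' _ _ := rfl

/-- The coordinate 1-form `dy_i`. -/
def dyL (m : ℕ) (i : Fin m × Fin 2) : Pt m →ₗ[ℝ] ℝ where
  toFun p := p.2.1 i
  map_add' _ _ := rfl
  map_smul' _ _ := rfl

/-- The coordinate 1-form `dz`. -/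
def dzL (m : ℕ) : Pt m →ₗ[ℝ] ℝ where
  toFun p := p.2.2.1
  map_add' _ _ := rfl
  map_smul' _ _ := rfl

/-- The coordinate 1-form `de_k`. -/
def deL (m : ℕ) (k : Fin 3) : Pt m →ₗ[ℝ] ℝ where
  toFun p := p.2.2.2 k
  map_add' _ _ := rfl
  map_smul' _ _ := rfl

/-- The invariant 1-form `θ = dz - 2∑ᵢ (yᵢ dxᵢ - xᵢ dyᵢ)` at the point `p`. -/
noncomputable def thetaL (m : ℕ) (p : Pt m) : Pt m →ₗ[ℝ] ℝ :=
  dzL m - (2 : ℝ) • ∑ i : Fin m × Fin 2, (p.2.1 i • dxL m i - p.1 i • dyL m i)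

/-- `f₁ = e₁ + 2 ∑ₐ (y_{2a-1} x_{2a} - x_{2a-1} y_{2a})`. -/
def f1 (m : ℕ) (p : Pt m) : ℝ :=
  p.2.2.2 0 + 2 * ∑ a : Fin m, (p.2.1 (a, 0) * p.1 (a, 1) - p.1 (a, 0) * p.2.1 (a, 1))

/-- Continuous version of `dxL`. -/
noncomputable def Xc (m : ℕ) (i : Fin m × Fin 2) : Pt m →L[ℝ] ℝ :=
  (ContinuousLinearMap.proj i).comp (ContinuousLinearMap.fst ℝ _ _)

/-- Continuous version of `dyL`. -/
noncomputable def Yc (m : ℕ) (i : Fin m × Fin 2) : Pt m →L[ℝ] ℝ :=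
  ((ContinuousLinearMap.proj i).comp (ContinuousLinearMap.fst ℝ _ _)).comp
    (ContinuousLinearMap.snd ℝ _ _)

/-- Continuous version of `deL`. -/
noncomputable def Ec (m : ℕ) (k : Fin 3) : Pt m →L[ℝ] ℝ :=
  ((ContinuousLinearMap.proj k).comp
    ((ContinuousLinearMap.snd ℝ _ _).comp (ContinuousLinearMap.snd ℝ _ _))).comp
    (ContinuousLinearMap.snd ℝ _ _)

@[simp] lemma Xc_apply (m : ℕ) (i : Fin m × Fin 2) (v : Pt m) : Xc m i v = v.1 i := rfl
@[simp] lemma Yc_apply (m : ℕ) (i : Fin m × Fin 2) (v : Pt m) : Yc m i v = v.2.1 i := rfl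
@[simp] lemma Ec_apply (m : ℕ) (k : Fin 3) (v : Pt m) : Ec m k v = v.2.2.2 k := rfl

theorem f1_hasFDerivAt (m : ℕ) (p : Pt m) :
    HasFDerivAt (f1 m)
      (Ec m 0 + (2:ℝ) • ∑ a : Fin m,
        ((p.2.1 (a,0) • Xc m (a,1) + p.1 (a,1) • Yc m (a,0)) -
         (p.1 (a,0) • Yc m (a,1) + p.2.1 (a,1) • Xc m (a,0)))) p := by
  have h : ∀ a : Fin m, HasFDerivAt
      (fun q : Pt m => q.2.1 (a,0) * q.1 (a,1) - q.1 (a,0) * q.2.1 (a,1))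
      ((p.2.1 (a,0) • Xc m (a,1) + p.1 (a,1) • Yc m (a,0)) -
       (p.1 (a,0) • Yc m (a,1) + p.2.1 (a,1) • Xc m (a,0))) p := fun a =>
    ((Yc m (a,0)).hasFDerivAt.mul (Xc m (a,1)).hasFDerivAt).sub
      ((Xc m (a,0)).hasFDerivAt.mul (Yc m (a,1)).hasFDerivAt)
  exact (Ec m 0).hasFDerivAt.add ((HasFDerivAt.fun_sum (fun a _ => h a)).const_mul 2)

/-- At every point `p` of `ℝ^{4m+4}`, if `J` is the action of `I₁` on 1-forms,
determined on the coframe `{dxᵢ, dyᵢ, θ, deₖ}` by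
`I₁ dx_{2a-1} = dx_{2a}`, `I₁ dy_{2a-1} = dy_{2a}`, `I₁ θ = de₁`,
`I₁ de₂ = de₃` (and `I₁² = -Id`), then `I₁(dz) = df₁`. -/
theorem I1_dz_exact (m : ℕ) (p : Pt m)
    (J : (Pt m →ₗ[ℝ] ℝ) →ₗ[ℝ] (Pt m →ₗ[ℝ] ℝ))
    (hx1 : ∀ a : Fin m, J (dxL m (a, 0)) = dxL m (a, 1))
    (hx2 : ∀ a : Fin m, J (dxL m (a, 1)) = -dxL m (a, 0))
    (hy1 : ∀ a : Fin m, J (dyL m (a, 0)) = dyL m (a, 1))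
    (hy2 : ∀ a : Fin m, J (dyL m (a, 1)) = -dyL m (a, 0))
    (hθ : J (thetaL m p) = deL m 0)
    (he1 : J (deL m 0) = -thetaL m p)
    (he2 : J (deL m 1) = deL m 2)
    (he3 : J (deL m 2) = -deL m 1) :
    J (dzL m) = (fderiv ℝ (f1 m) p).toLinearMap := by
  have hfd := (f1_hasFDerivAt m p).fderiv
  rw [hfd]
  have hdz : dzL m = thetaL m p +
      (2 : ℝ) • ∑ i : Fin m × Fin 2, (p.2.1 i • dxL m i - p.1 i • dyL m i) := by
    simp [thetaL]
  rw [hdz]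
  refine LinearMap.ext fun v => ?_
  simp only [map_add, map_smul, map_sum, map_sub, hθ, LinearMap.add_apply,
    LinearMap.smul_apply, LinearMap.sum_apply, LinearMap.sub_apply,
    Fintype.sum_prod_type, Fin.sum_univ_two, hx1, hx2, hy1, hy2,
    ContinuousLinearMap.coe_add, ContinuousLinearMap.coe_smul,
    ContinuousLinearMap.coe_sum, ContinuousLinearMap.coe_sub]
  simp only [LinearMap.neg_apply, smul_eq_mul, ContinuousLinearMap.add_apply,
    ContinuousLinearMap.smul_apply, ContinuousLinearMap.sum_apply,
    ContinuousLinearMap.sub_apply, ContinuousLinearMap.coe_coe, Xc_apply, Yc_apply, Ec_apply, deL, dxL, dyL,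
    LinearMap.coe_mk, AddHom.coe_mk]
  rw [Finset.mul_sum, Finset.mul_sum]
  congr 1
  exact Finset.sum_congr rfl fun a _ => by ring
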